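/- arXiv:2604.11254 — 3 statements merged into one kernel-verified Lean document; each statement's English description precedes it below -/
import Mathlib

section
/- Antipodal symmetry of the forward Finsler distance (Lemma 1, first identity): If the cost function C is antipodally symmetric, then for all points p₀, p₁ of the space of positions and orientations one has d_F₀⁺(p₀, p₁) = d_F₀⁺(p̄₁, p̄₀). -/
open Set MeasureTheory
open scoped ENNReal

noncomputable section

/-- The orientation vector `n(θ) = (cos θ, sin θ)`. -/
def nvec (θ : ℝ) : ℝ × ℝ := (Real.cos θ, Real.sin θ)

/-- Euclidean dot product on `ℝ × ℝ`. -/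
def dot (a b : ℝ × ℝ) : ℝ := a.1 * b.1 + a.2 * b.2

/-- Euclidean norm on `ℝ × ℝ`. -/
def enorm2 (v : ℝ × ℝ) : ℝ := Real.sqrt (v.1 ^ 2 + v.2 ^ 2)

/-- A point of the space of positions and orientations: a position in `ℝ²`
together with an orientation vector in `ℝ²` (intended to be a unit vector). -/
abbrev Pt := (ℝ × ℝ) × (ℝ × ℝ)

/-- The antipode `p̄ = (x, -n)` of a point `p = (x, n)`. -/
def antipode (p : Pt) : Pt := (p.1, -p.2)

/-- A candidate curve, given by a spatial part `x` and an angular part `θ`. -/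
structure Curve where
  x : ℝ → ℝ × ℝ
  th : ℝ → ℝ

/-- A map is piecewise continuously differentiable on `[0,1]`: it is continuous
on `[0,1]` and, off a finite set, differentiable with continuous derivative. -/
def PiecewiseC1 {E : Type*} [NormedAddCommGroup E] [NormedSpace ℝ E] (f : ℝ → E) : Prop :=
  ContinuousOn f (Icc 0 1) ∧
    ∃ s : Finset ℝ, ∀ t ∈ Icc (0 : ℝ) 1 \ (s : Set ℝ),
      DifferentiableAt ℝ f t ∧ ContinuousAt (deriv f) t

namespace Curve

/-- Both components of the curve are piecewise `C¹`. -/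
def Admissible (γ : Curve) : Prop := PiecewiseC1 γ.x ∧ PiecewiseC1 γ.th

/-- The spatial control `u¹(t) = ẋ(t) ⬝ n(θ(t))`. -/
def u1 (γ : Curve) (t : ℝ) : ℝ := dot (deriv γ.x t) (nvec (γ.th t))

/-- The angular control `u³(t) = θ̇(t)`. -/
def u3 (γ : Curve) (t : ℝ) : ℝ := deriv γ.th t

/-- Horizontality: wherever the spatial derivative exists,
`ẋ(t) ∈ span {n(θ(t))}`. -/
def Horizontal (γ : Curve) : Prop :=
  ∀ t ∈ Icc (0 : ℝ) 1, DifferentiableAt ℝ γ.x t →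
    ∃ c : ℝ, deriv γ.x t = c • nvec (γ.th t)

/-- Boundary conditions: the curve joins `p₀` to `p₁` (the angular boundary
conditions hold modulo `2π`, which is expressed via the orientation vectors). -/
def Joins (γ : Curve) (p₀ p₁ : Pt) : Prop :=
  γ.x 0 = p₀.1 ∧ γ.x 1 = p₁.1 ∧ nvec (γ.th 0) = p₀.2 ∧ nvec (γ.th 1) = p₁.2

end Curve

/-- The length `L(γ) = ∫₀¹ C(x(t), n(θ(t))) √(ξ² u¹(t)² + u³(t)²) dt`. -/
def length (ξ : ℝ) (C : Pt → ℝ) (γ : Curve) : ℝ :=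
  ∫ t in (0 : ℝ)..1,
    C (γ.x t, nvec (γ.th t)) * Real.sqrt (ξ ^ 2 * γ.u1 t ^ 2 + γ.u3 t ^ 2)

/-- `Γ₀(p₀,p₁)`: horizontal admissible candidate curves from `p₀` to `p₁`. -/
def Gamma0 (p₀ p₁ : Pt) : Set Curve :=
  {γ | γ.Admissible ∧ γ.Horizontal ∧ γ.Joins p₀ p₁}

/-- `Γ₀⁺(p₀,p₁)`: members of `Γ₀(p₀,p₁)` with `u¹ ≥ 0` wherever defined. -/
def Gamma0plus (p₀ p₁ : Pt) : Set Curve :=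
  {γ ∈ Gamma0 p₀ p₁ | ∀ t ∈ Icc (0 : ℝ) 1, DifferentiableAt ℝ γ.x t → 0 ≤ γ.u1 t}

/-- `Γ₀⁻(p₀,p₁)`: members of `Γ₀(p₀,p₁)` with `u¹ ≤ 0` wherever defined. -/
def Gamma0minus (p₀ p₁ : Pt) : Set Curve :=
  {γ ∈ Gamma0 p₀ p₁ | ∀ t ∈ Icc (0 : ℝ) 1, DifferentiableAt ℝ γ.x t → γ.u1 t ≤ 0}

/-- The sub-Riemannian distance `d_F₀` (with `inf ∅ = +∞`). -/
def dF0 (ξ : ℝ) (C : Pt → ℝ) (p₀ p₁ : Pt) : ℝ≥0∞ :=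
  ⨅ γ ∈ Gamma0 p₀ p₁, ENNReal.ofReal (length ξ C γ)

/-- The forward (asymmetric) Finsler distance `d_F₀⁺` (with `inf ∅ = +∞`). -/
def dF0plus (ξ : ℝ) (C : Pt → ℝ) (p₀ p₁ : Pt) : ℝ≥0∞ :=
  ⨅ γ ∈ Gamma0plus p₀ p₁, ENNReal.ofReal (length ξ C γ)

/-- The backward Finsler distance `d_F₀⁻` (with `inf ∅ = +∞`). -/
def dF0minus (ξ : ℝ) (C : Pt → ℝ) (p₀ p₁ : Pt) : ℝ≥0∞ :=
  ⨅ γ ∈ Gamma0minus p₀ p₁, ENNReal.ofReal (length ξ C γ)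

/-- The cusp-free model `d_c` on the projective line bundle:
the minimum of `d_F₀⁺` over representatives `q₀ ∈ [p₀] = {p₀, p̄₀}` and
`q₁ ∈ [p₁] = {p₁, p̄₁}`. -/
def dc (ξ : ℝ) (C : Pt → ℝ) (p₀ p₁ : Pt) : ℝ≥0∞ :=
  min (min (dF0plus ξ C p₀ p₁) (dF0plus ξ C p₀ (antipode p₁)))
      (min (dF0plus ξ C (antipode p₀) p₁) (dF0plus ξ C (antipode p₀) (antipode p₁)))

/-- The projective line bundle model `d_proj`:
the minimum of `d_F₀` over representatives of the classes. -/
def dproj (ξ : ℝ) (C : Pt → ℝ) (p₀ p₁ : Pt) : ℝ≥0∞ :=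
  min (min (dF0 ξ C p₀ p₁) (dF0 ξ C p₀ (antipode p₁)))
      (min (dF0 ξ C (antipode p₀) p₁) (dF0 ξ C (antipode p₀) (antipode p₁)))

/-- `Γᶜ([p₀],[p₁])`: curves between representatives of the two classes whose
spatial control has a constant sign (nonnegative or nonpositive everywhere). -/
def GammaC (p₀ p₁ : Pt) : Set Curve :=
  (Gamma0plus p₀ p₁ ∪ Gamma0minus p₀ p₁) ∪
  (Gamma0plus p₀ (antipode p₁) ∪ Gamma0minus p₀ (antipode p₁)) ∪
  (Gamma0plus (antipode p₀) p₁ ∪ Gamma0minus (antipode p₀) p₁) ∪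
  (Gamma0plus (antipode p₀) (antipode p₁) ∪ Gamma0minus (antipode p₀) (antipode p₁))

/-- The cost function `C` is antipodally symmetric. -/
def AntipodallySymmetric (C : Pt → ℝ) : Prop :=
  ∀ x n : ℝ × ℝ, C (x, n) = C (x, -n)

/-- Distance on the circle: `ρ(θ₀, θ₁) = min_{k ∈ ℤ} |θ₁ - θ₀ + 2πk|`. -/
def rho (θ₀ θ₁ : ℝ) : ℝ :=
  sInf (Set.range fun k : ℤ => |θ₁ - θ₀ + 2 * Real.pi * k|)


/-- Time reversal composed with the antipodal flip of the orientation. -/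
def revCurve (γ : Curve) : Curve :=
  ⟨fun t => γ.x (1 - t), fun t => γ.th (1 - t) + Real.pi⟩

lemma nvec_add_pi (a : ℝ) : nvec (a + Real.pi) = -nvec a := by
  simp [nvec, Real.cos_add_pi, Real.sin_add_pi, Prod.ext_iff]

lemma deriv_one_sub {E : Type*} [NormedAddCommGroup E] [NormedSpace ℝ E]
    (f : ℝ → E) (t : ℝ) : deriv (fun s => f (1 - s)) t = -deriv f (1 - t) :=
  deriv_comp_const_sub f 1 t

lemma one_sub_mem {t : ℝ} (ht : t ∈ Icc (0:ℝ) 1) : (1 - t) ∈ Icc (0:ℝ) 1 := by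
  constructor <;> [linarith [ht.2]; linarith [ht.1]]

lemma diffAt_one_sub {E : Type*} [NormedAddCommGroup E] [NormedSpace ℝ E]
    {f : ℝ → E} {t : ℝ} (hf : DifferentiableAt ℝ f (1 - t)) :
    DifferentiableAt ℝ (fun s => f (1 - s)) t := by
  exact DifferentiableAt.comp t hf (by fun_prop)

lemma diffAt_of_one_sub {E : Type*} [NormedAddCommGroup E] [NormedSpace ℝ E]
    {f : ℝ → E} {t : ℝ} (hf : DifferentiableAt ℝ (fun s => f (1 - s)) t) :
    DifferentiableAt ℝ f (1 - t) := by
  have : f = fun s => (fun u => f (1 - u)) (1 - s) := by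
    funext s; simp
  rw [this]
  exact diffAt_one_sub (f := fun u => f (1 - u)) (t := 1 - t) (by simpa using hf)

lemma piecewiseC1_one_sub {E : Type*} [NormedAddCommGroup E] [NormedSpace ℝ E]
    {f : ℝ → E} (hf : PiecewiseC1 f) : PiecewiseC1 (fun s => f (1 - s)) := by
  obtain ⟨hc, s, hs⟩ := hf
  refine ⟨?_, s.image (fun a => 1 - a), ?_⟩
  · have : ContinuousOn (fun s : ℝ => 1 - s) (Icc 0 1) := by fun_prop
    exact hc.comp this fun t ht => one_sub_mem ht
  · rintro t ⟨ht, hts⟩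
    have h1 : (1 - t) ∈ Icc (0:ℝ) 1 \ (s : Set ℝ) := by
      refine ⟨one_sub_mem ht, fun hmem => hts ?_⟩
      simp only [Finset.coe_image, Set.mem_image]
      exact ⟨1 - t, hmem, by ring⟩
    obtain ⟨hd, hcd⟩ := hs _ h1
    refine ⟨diffAt_one_sub hd, ?_⟩
    have heq : deriv (fun s => f (1 - s)) = fun u => -deriv f (1 - u) := by
      funext u; exact deriv_one_sub f u
    rw [heq]
    exact (hcd.comp (by fun_prop)).neg

lemma piecewiseC1_add_const {f : ℝ → ℝ} (c : ℝ) (hf : PiecewiseC1 f) :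
    PiecewiseC1 (fun s => f s + c) := by
  obtain ⟨hc, s, hs⟩ := hf
  refine ⟨by fun_prop, s, fun t ht => ?_⟩
  obtain ⟨hd, hcd⟩ := hs t ht
  refine ⟨by fun_prop, ?_⟩
  have : deriv (fun s => f s + c) = deriv f := deriv_add_const' c
  rw [this]; exact hcd

lemma revCurve_u1 (γ : Curve) (t : ℝ) : (revCurve γ).u1 t = γ.u1 (1 - t) := by
  simp only [Curve.u1, revCurve, deriv_one_sub, nvec_add_pi, dot,
    Prod.fst_neg, Prod.snd_neg]
  ring

lemma revCurve_u3 (γ : Curve) (t : ℝ) : (revCurve γ).u3 t = -γ.u3 (1 - t) := by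
  simp only [Curve.u3, revCurve]
  rw [deriv_add_const, deriv_one_sub]

lemma revCurve_length (ξ : ℝ) (C : Pt → ℝ) (hsym : AntipodallySymmetric C) (γ : Curve) :
    length ξ C (revCurve γ) = length ξ C γ := by
  unfold length
  have h : ∀ t : ℝ,
      C ((revCurve γ).x t, nvec ((revCurve γ).th t)) *
        Real.sqrt (ξ ^ 2 * (revCurve γ).u1 t ^ 2 + (revCurve γ).u3 t ^ 2)
      = C (γ.x (1 - t), nvec (γ.th (1 - t))) *
        Real.sqrt (ξ ^ 2 * γ.u1 (1 - t) ^ 2 + γ.u3 (1 - t) ^ 2) := by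
    intro t
    rw [revCurve_u1, revCurve_u3]
    show C (γ.x (1 - t), nvec (γ.th (1 - t) + Real.pi)) * _ = _
    rw [nvec_add_pi, ← hsym, neg_sq]
  simp only [h]
  have := intervalIntegral.integral_comp_sub_left (a := 0) (b := 1)
    (fun u => C (γ.x u, nvec (γ.th u)) * Real.sqrt (ξ ^ 2 * γ.u1 u ^ 2 + γ.u3 u ^ 2)) 1
  norm_num at this
  exact this

lemma revCurve_mem (γ : Curve) (p₀ p₁ : Pt) (hγ : γ ∈ Gamma0plus p₀ p₁) :
    revCurve γ ∈ Gamma0plus (antipode p₁) (antipode p₀) := by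
  obtain ⟨⟨⟨hx, hth⟩, hhor, hj⟩, hpos⟩ := hγ
  refine ⟨⟨⟨piecewiseC1_one_sub hx, piecewiseC1_add_const _ (piecewiseC1_one_sub hth)⟩, ?_, ?_⟩, ?_⟩
  · intro t ht hd
    have hd' : DifferentiableAt ℝ γ.x (1 - t) := diffAt_of_one_sub hd
    obtain ⟨c, hc⟩ := hhor (1 - t) (one_sub_mem ht) hd'
    refine ⟨c, ?_⟩
    show deriv (fun s => γ.x (1 - s)) t = _
    rw [deriv_one_sub, hc]
    show _ = c • nvec (γ.th (1 - t) + Real.pi)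
    rw [nvec_add_pi, smul_neg]
  · obtain ⟨h0, h1, hn0, hn1⟩ := hj
    refine ⟨by simpa [revCurve, antipode] using h1, by simpa [revCurve, antipode] using h0, ?_, ?_⟩
    · show nvec (γ.th (1 - 0) + Real.pi) = _
      rw [nvec_add_pi]; simp [antipode, hn1]
    · show nvec (γ.th (1 - 1) + Real.pi) = _
      rw [nvec_add_pi]; simp [antipode, hn0]
  · intro t ht hd
    rw [revCurve_u1]
    exact hpos (1 - t) (one_sub_mem ht) (diffAt_of_one_sub hd)

lemma dF0plus_antipode_le (ξ : ℝ) (C : Pt → ℝ) (hsym : AntipodallySymmetric C) (p₀ p₁ : Pt) :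
    dF0plus ξ C (antipode p₁) (antipode p₀) ≤ dF0plus ξ C p₀ p₁ := by
  refine le_iInf₂ fun γ hγ => ?_
  calc dF0plus ξ C (antipode p₁) (antipode p₀)
      ≤ ENNReal.ofReal (length ξ C (revCurve γ)) := iInf₂_le _ (revCurve_mem γ p₀ p₁ hγ)
    _ = ENNReal.ofReal (length ξ C γ) := by rw [revCurve_length ξ C hsym]

lemma antipode_antipode (p : Pt) : antipode (antipode p) = p := by
  simp [antipode]

/-- antipodal symmetry of the forward Finsler distance `d_F₀⁺`. -/
theorem antipodal_symmetry_dF0plus (ξ δ : ℝ) (hξ : 0 < ξ) (hδ : 0 < δ)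
    (C : Pt → ℝ) (hC : Continuous C) (hCδ : ∀ q, δ ≤ C q)
    (hsym : AntipodallySymmetric C) (p₀ p₁ : Pt) :
    dF0plus ξ C p₀ p₁ = dF0plus ξ C (antipode p₁) (antipode p₀) := by
  refine le_antisymm ?_ (dF0plus_antipode_le ξ C hsym p₀ p₁)
  have := dF0plus_antipode_le ξ C hsym (antipode p₁) (antipode p₀)
  rwa [antipode_antipode, antipode_antipode] at this

end
end

section
/- Triangle inequality for d_c at cusp-free-reachable endpoints (Theorem 3, Eq. (dho)): Assume the cost function C is antipodally symmetric. Suppose there exist representatives q₀ ∈ [p₀], q₁ ∈ [p₁] and a curve γ ∈ Γ₀⁺(q₀,q₁) ∪ Γ₀⁻(q₀,q₁) with L(γ) = d_proj([p₀],[p₁]). Then for every class [p₂] in the projective line bundle one has d_c([p₀],[p₁]) ≤ d_c([p₀],[p₂]) + d_c([p₂],[p₁]). -/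
open Set MeasureTheory
open scoped ENNReal

noncomputable section

namespace Aux

/-! ### Calculus helpers -/

section Affine
variable {E : Type*} [NormedAddCommGroup E] [NormedSpace ℝ E]

theorem diffAt_comp_affine_iff (f : ℝ → E) {c : ℝ} (hc : c ≠ 0) (a t : ℝ) :
    DifferentiableAt ℝ (fun s => f (c * s + a)) t ↔ DifferentiableAt ℝ f (c * t + a) := by
  constructor
  · intro h
    have hfe : f = (fun s => f (c * s + a)) ∘ (fun x => (x - a) / c) := by
      funext x; simp only [Function.comp_apply]; congr 1; field_simp; ring
    have h2 : DifferentiableAt ℝ (fun x : ℝ => (x - a) / c) (c * t + a) := by fun_prop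
    have he : ((c * t + a - a) / c) = t := by field_simp; ring
    rw [hfe]
    exact DifferentiableAt.comp _ (by rw [he]; exact h) h2
  · intro h
    have h2 : DifferentiableAt ℝ (fun s : ℝ => c * s + a) t := by fun_prop
    exact h.comp t h2

theorem deriv_comp_affine (f : ℝ → E) {c : ℝ} (hc : c ≠ 0) (a t : ℝ) :
    deriv (fun s => f (c * s + a)) t = c • deriv f (c * t + a) := by
  by_cases h : DifferentiableAt ℝ f (c * t + a)
  · have h2 : HasDerivAt (fun s : ℝ => c * s + a) c t := by
      simpa using ((hasDerivAt_id t).const_mul c).add_const a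
    have := h.hasDerivAt.scomp t h2
    exact this.deriv
  · rw [deriv_zero_of_not_differentiableAt h, smul_zero,
      deriv_zero_of_not_differentiableAt]
    rw [diffAt_comp_affine_iff f hc]
    exact h

theorem deriv_zero_of_right_const {f : ℝ → E} {a : ℝ} {c : E}
    (hd : DifferentiableAt ℝ f a) (h : ∀ᶠ s in nhdsWithin a (Set.Ici a), f s = c) :
    deriv f a = 0 := by
  have h1 : HasDerivWithinAt f (deriv f a) (Ici a) a := hd.hasDerivAt.hasDerivWithinAt
  have hc : f a = c := h.self_of_nhdsWithin self_mem_Ici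
  have h2 : HasDerivWithinAt f 0 (Ici a) a :=
    (hasDerivWithinAt_const a (Ici a) c).congr_of_eventuallyEq h hc
  have e1 := h1.derivWithin (uniqueDiffOn_Ici a a (self_mem_Ici))
  have e2 := h2.derivWithin (uniqueDiffOn_Ici a a (self_mem_Ici))
  rw [← e1, e2]

theorem deriv_zero_of_left_const {f : ℝ → E} {a : ℝ} {c : E}
    (hd : DifferentiableAt ℝ f a) (h : ∀ᶠ s in nhdsWithin a (Set.Iic a), f s = c) :
    deriv f a = 0 := by
  have h1 : HasDerivWithinAt f (deriv f a) (Iic a) a := hd.hasDerivAt.hasDerivWithinAt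
  have hc : f a = c := h.self_of_nhdsWithin self_mem_Iic
  have h2 : HasDerivWithinAt f 0 (Iic a) a :=
    (hasDerivWithinAt_const a (Iic a) c).congr_of_eventuallyEq h hc
  have e1 := h1.derivWithin (uniqueDiffOn_Iic a a (self_mem_Iic))
  have e2 := h2.derivWithin (uniqueDiffOn_Iic a a (self_mem_Iic))
  rw [← e1, e2]

end Affine

/-! ### nvec facts -/

theorem nvec_add_pi (θ : ℝ) : nvec (θ + Real.pi) = -nvec θ := by
  simp [nvec, Real.cos_add, Real.sin_add, Prod.ext_iff]

theorem nvec_eq_of_eq {a b : ℝ} (h : nvec a = nvec b) : ∃ k : ℤ, a = b + 2 * Real.pi * k := by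
  have hcos : Real.cos a = Real.cos b := congrArg Prod.fst h
  have hsin : Real.sin a = Real.sin b := congrArg Prod.snd h
  have := Real.Angle.angle_eq_iff_two_pi_dvd_sub.1 (Real.Angle.cos_sin_inj hcos hsin)
  obtain ⟨k, hk⟩ := this
  exact ⟨k, by linarith⟩

theorem nvec_add_two_pi_int (θ : ℝ) (k : ℤ) : nvec (θ + 2 * Real.pi * k) = nvec θ := by
  have h1 : θ + 2 * Real.pi * k = θ + k * (2 * Real.pi) := by ring
  simp [nvec, h1, Real.cos_add_int_mul_two_pi, Real.sin_add_int_mul_two_pi]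

theorem dot_smul_left (c : ℝ) (a b : ℝ × ℝ) : dot (c • a) b = c * dot a b := by
  simp [dot, Prod.smul_fst, Prod.smul_snd, smul_eq_mul]; ring

theorem dot_neg_right (a b : ℝ × ℝ) : dot a (-b) = -dot a b := by
  simp [dot]; ring


/-! ### Gluing -/

section Glue
variable {E : Type*} [NormedAddCommGroup E] [NormedSpace ℝ E]

def glue (f g : ℝ → E) : ℝ → E := fun t =>
  if t ≤ 1/4 then f (4*t) else if t ≤ 3/4 then f 1 else g (4*t - 3)

variable (f g : ℝ → E)

theorem glue_ev_left {t : ℝ} (ht : t < 1/4) :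
    glue f g =ᶠ[nhds t] fun s => f (4*s) := by
  filter_upwards [Iio_mem_nhds ht] with s hs
  simp only [glue, if_pos (le_of_lt (mem_Iio.1 hs))]

theorem glue_ev_mid {t : ℝ} (h1 : 1/4 < t) (h2 : t < 3/4) :
    glue f g =ᶠ[nhds t] fun _ => f 1 := by
  filter_upwards [Ioo_mem_nhds h1 h2] with s hs
  simp only [glue, if_neg (not_le.2 hs.1), if_pos (le_of_lt hs.2)]

theorem glue_ev_right {t : ℝ} (ht : 3/4 < t) :
    glue f g =ᶠ[nhds t] fun s => g (4*s - 3) := by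
  filter_upwards [Ioi_mem_nhds ht] with s hs
  have h1 : ¬ s ≤ 1/4 := by simp only [mem_Ioi] at hs; intro h; linarith
  have h2 : ¬ s ≤ 3/4 := by simp only [mem_Ioi] at hs; intro h; linarith
  simp only [glue, if_neg h1, if_neg h2]

theorem glue_deriv_left {t : ℝ} (ht : t < 1/4) :
    deriv (glue f g) t = (4:ℝ) • deriv f (4*t) := by
  rw [(glue_ev_left f g ht).deriv_eq]
  have h : (fun s => f (4*s)) = fun s => f (4*s + 0) := by funext s; rw [add_zero]
  rw [h, deriv_comp_affine f (by norm_num) 0 t, add_zero]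

theorem glue_diff_left {t : ℝ} (ht : t < 1/4) :
    DifferentiableAt ℝ (glue f g) t ↔ DifferentiableAt ℝ f (4*t) := by
  rw [(glue_ev_left f g ht).differentiableAt_iff]
  have h : (fun s => f (4*s)) = fun s => f (4*s + 0) := by funext s; rw [add_zero]
  rw [h, diffAt_comp_affine_iff f (by norm_num) 0 t, add_zero]

theorem glue_deriv_mid {t : ℝ} (h1 : 1/4 < t) (h2 : t < 3/4) :
    deriv (glue f g) t = 0 := by
  rw [(glue_ev_mid f g h1 h2).deriv_eq, deriv_const]

theorem glue_diff_mid {t : ℝ} (h1 : 1/4 < t) (h2 : t < 3/4) :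
    DifferentiableAt ℝ (glue f g) t := by
  rw [(glue_ev_mid f g h1 h2).differentiableAt_iff]
  exact differentiableAt_const _

theorem glue_deriv_right {t : ℝ} (ht : 3/4 < t) :
    deriv (glue f g) t = (4:ℝ) • deriv g (4*t - 3) := by
  rw [(glue_ev_right f g ht).deriv_eq]
  have h : (fun s => g (4*s - 3)) = fun s => g (4*s + (-3)) := by
    funext s; rw [sub_eq_add_neg]
  rw [h, deriv_comp_affine g (by norm_num) (-3) t, sub_eq_add_neg]

theorem glue_diff_right {t : ℝ} (ht : 3/4 < t) :
    DifferentiableAt ℝ (glue f g) t ↔ DifferentiableAt ℝ g (4*t - 3) := by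
  rw [(glue_ev_right f g ht).differentiableAt_iff]
  have h : (fun s => g (4*s - 3)) = fun s => g (4*s + (-3)) := by
    funext s; rw [sub_eq_add_neg]
  rw [h, diffAt_comp_affine_iff g (by norm_num) (-3) t, sub_eq_add_neg]

theorem glue_ev_right_const_quarter :
    ∀ᶠ s in nhdsWithin (1/4 : ℝ) (Ici (1/4 : ℝ)), glue f g s = f 1 := by
  filter_upwards [Filter.inter_mem (mem_nhdsWithin_of_mem_nhds (Iio_mem_nhds (by norm_num :
      (1/4:ℝ) < 3/4))) self_mem_nhdsWithin] with s hs
  obtain ⟨hs1, hs2⟩ := hs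
  by_cases h : s ≤ 1/4
  · have : s = 1/4 := le_antisymm h hs2
    subst this
    simp only [glue, if_pos h]
    norm_num
  · simp only [glue, if_neg h, if_pos (le_of_lt (mem_Iio.1 hs1))]

theorem glue_ev_left_const_3quarter :
    ∀ᶠ s in nhdsWithin (3/4 : ℝ) (Iic (3/4 : ℝ)), glue f g s = f 1 := by
  filter_upwards [Filter.inter_mem (mem_nhdsWithin_of_mem_nhds (Ioi_mem_nhds (by norm_num :
      (1/4:ℝ) < 3/4))) self_mem_nhdsWithin] with s hs
  obtain ⟨hs1, hs2⟩ := hs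
  have h : ¬ s ≤ 1/4 := not_le.2 (mem_Ioi.1 hs1)
  simp only [glue, if_neg h, if_pos (mem_Iic.1 hs2)]

theorem glue_continuousOn (hf : ContinuousOn f (Icc 0 1)) (hg : ContinuousOn g (Icc 0 1))
    (hfg : f 1 = g 0) : ContinuousOn (glue f g) (Icc 0 1) := by
  have c1 : ContinuousOn (glue f g) (Icc 0 (1/4)) := by
    have : ContinuousOn (fun t => f (4*t)) (Icc 0 (1/4)) := by
      apply hf.comp (by fun_prop : Continuous fun t : ℝ => 4*t).continuousOn
      intro t ht
      exact ⟨by simp only [mem_Icc] at ht ⊢; linarith [ht.1],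
             by simp only [mem_Icc] at ht ⊢; linarith [ht.2]⟩
    exact this.congr fun t ht => by
      simp only [glue, if_pos (mem_Icc.1 ht).2]
  have c2 : ContinuousOn (glue f g) (Icc (1/4) (3/4)) := by
    refine (continuousOn_const (c := f 1)).congr fun t ht => ?_
    obtain ⟨h1, h2⟩ := mem_Icc.1 ht
    by_cases h : t ≤ 1/4
    · have : t = 1/4 := le_antisymm h h1
      subst this
      simp only [glue, if_pos h]; norm_num
    · simp only [glue, if_neg h, if_pos h2]
  have c3 : ContinuousOn (glue f g) (Icc (3/4) 1) := by
    have : ContinuousOn (fun t => g (4*t - 3)) (Icc (3/4) 1) := by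
      apply hg.comp (by fun_prop : Continuous fun t : ℝ => 4*t - 3).continuousOn
      intro t ht
      exact ⟨by simp only [mem_Icc] at ht ⊢; linarith [ht.1],
             by simp only [mem_Icc] at ht ⊢; linarith [ht.2]⟩
    exact this.congr fun t ht => by
      obtain ⟨h1, h2⟩ := mem_Icc.1 ht
      by_cases h : t ≤ 1/4
      · exfalso; linarith
      · by_cases h' : t ≤ 3/4
        · have : t = 3/4 := le_antisymm h' h1
          subst this
          simp only [glue, if_neg h, if_pos h']
          rw [hfg]; norm_num
        · simp only [glue, if_neg h, if_neg h']
  intro t ht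
  have hsub : Icc (0:ℝ) 1 ⊆ Icc 0 (1/4) ∪ (Icc (1/4) (3/4) ∪ Icc (3/4) 1) := by
    intro s hs
    obtain ⟨h0, h1⟩ := mem_Icc.1 hs
    by_cases hA : s ≤ 1/4
    · exact Or.inl ⟨h0, hA⟩
    · by_cases hB : s ≤ 3/4
      · exact Or.inr (Or.inl ⟨le_of_lt (not_le.1 hA), hB⟩)
      · exact Or.inr (Or.inr ⟨le_of_lt (not_le.1 hB), h1⟩)
  have key : ∀ (I : Set ℝ), IsClosed I → ContinuousOn (glue f g) I →
      ContinuousWithinAt (glue f g) I t := by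
    intro I hI hcI
    by_cases hmem : t ∈ I
    · exact hcI t hmem
    · exact continuousWithinAt_of_notMem_closure (by rwa [hI.closure_eq])
  have := ((key _ isClosed_Icc c1).union ((key _ isClosed_Icc c2).union
    (key _ isClosed_Icc c3)))
  exact this.mono hsub


theorem glue_pc1 {E : Type*} [NormedAddCommGroup E] [NormedSpace ℝ E] (f g : ℝ → E)
    (hf : PiecewiseC1 f) (hg : PiecewiseC1 g) (hfg : f 1 = g 0) :
    PiecewiseC1 (glue f g) := by
  obtain ⟨hfc, s₁, hs₁⟩ := hf
  obtain ⟨hgc, s₂, hs₂⟩ := hg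
  refine ⟨glue_continuousOn f g hfc hgc hfg,
    (s₁.image (fun a => a/4)) ∪ (s₂.image (fun a => (a+3)/4)) ∪ {1/4, 3/4}, ?_⟩
  intro t ht
  obtain ⟨htI, hts⟩ := ht
  rw [Finset.coe_union, Finset.coe_union] at hts
  have h14 : t ≠ 1/4 := by
    intro h; exact hts (Or.inr (by simp [h]))
  have h34 : t ≠ 3/4 := by
    intro h; exact hts (Or.inr (by simp [h]))
  have hA : (4*t) ∉ (s₁ : Set ℝ) := by
    intro h
    exact hts (Or.inl (Or.inl (by
      simp only [Finset.coe_image, mem_image, Finset.mem_coe]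
      exact ⟨4*t, h, by ring⟩)))
  have hB : (4*t - 3) ∉ (s₂ : Set ℝ) := by
    intro h
    exact hts (Or.inl (Or.inr (by
      simp only [Finset.coe_image, mem_image, Finset.mem_coe]
      exact ⟨4*t - 3, h, by ring⟩)))
  obtain ⟨ht0, ht1⟩ := mem_Icc.1 htI
  rcases lt_trichotomy t (1/4) with h | h | h
  · have h4t : (4*t) ∈ Icc (0:ℝ) 1 \ (s₁ : Set ℝ) :=
      ⟨mem_Icc.2 ⟨by linarith, by linarith⟩, hA⟩
    obtain ⟨hd, hc⟩ := hs₁ _ h4t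
    refine ⟨(glue_diff_left f g h).2 hd, ?_⟩
    have hev : deriv (glue f g) =ᶠ[nhds t] fun s => (4:ℝ) • deriv f (4*s) := by
      filter_upwards [Iio_mem_nhds h] with s hs using glue_deriv_left f g (mem_Iio.1 hs)
    have hca : ContinuousAt (fun s : ℝ => (4:ℝ) • deriv f (4*s)) t := by
      have h2 : ContinuousAt (fun s : ℝ => deriv f (4*s)) t :=
        ContinuousAt.comp (by simpa using hc) (by fun_prop)
      exact h2.const_smul 4
    exact hca.congr hev.symm
  · exact absurd h h14
  · rcases lt_trichotomy t (3/4) with h' | h' | h'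
    · refine ⟨glue_diff_mid f g h h', ?_⟩
      have hev : deriv (glue f g) =ᶠ[nhds t] fun _ => (0 : E) := by
        filter_upwards [Ioo_mem_nhds h h'] with s hs using
          glue_deriv_mid f g hs.1 hs.2
      exact continuousAt_const.congr hev.symm
    · exact absurd h' h34
    · have h4t : (4*t - 3) ∈ Icc (0:ℝ) 1 \ (s₂ : Set ℝ) :=
        ⟨mem_Icc.2 ⟨by linarith, by linarith⟩, hB⟩
      obtain ⟨hd, hc⟩ := hs₂ _ h4t
      refine ⟨(glue_diff_right f g h').2 hd, ?_⟩
      have hev : deriv (glue f g) =ᶠ[nhds t] fun s => (4:ℝ) • deriv g (4*s - 3) := by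
        filter_upwards [Ioi_mem_nhds h'] with s hs using glue_deriv_right f g (mem_Ioi.1 hs)
      have hca : ContinuousAt (fun s : ℝ => (4:ℝ) • deriv g (4*s - 3)) t := by
        have hlin : ContinuousAt (fun s : ℝ => 4*s - 3) t := by fun_prop
        have h2 : ContinuousAt ((deriv g) ∘ (fun s : ℝ => 4*s - 3)) t :=
          ContinuousAt.comp (by simpa using hc) hlin
        simp only [Function.comp_def] at h2
        exact h2.const_smul 4
      exact hca.congr hev.symm

end Glue


/-! ### Flip -/

def flip (γ : Curve) : Curve := ⟨γ.x, fun t => γ.th t + Real.pi⟩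

theorem pc1_add_const {f : ℝ → ℝ} (c : ℝ) (h : PiecewiseC1 f) :
    PiecewiseC1 (fun t => f t + c) := by
  obtain ⟨h1, s, h2⟩ := h
  refine ⟨h1.add continuousOn_const, s, fun t ht => ?_⟩
  obtain ⟨hd, hc⟩ := h2 t ht
  refine ⟨hd.add_const c, ?_⟩
  rw [deriv_add_const']
  exact hc

theorem flip_x (γ : Curve) : (flip γ).x = γ.x := rfl

theorem flip_th (γ : Curve) (t : ℝ) : (flip γ).th t = γ.th t + Real.pi := rfl

theorem flip_nvec (γ : Curve) (t : ℝ) : nvec ((flip γ).th t) = -nvec (γ.th t) := by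
  rw [flip_th, nvec_add_pi]

theorem flip_u1 (γ : Curve) (t : ℝ) : (flip γ).u1 t = -γ.u1 t := by
  unfold Curve.u1
  rw [flip_x, flip_nvec, dot_neg_right]

theorem flip_u3 (γ : Curve) (t : ℝ) : (flip γ).u3 t = γ.u3 t := by
  unfold Curve.u3
  show deriv (fun t => γ.th t + Real.pi) t = _
  rw [deriv_add_const]

theorem length_flip {ξ : ℝ} {C : Pt → ℝ} (hsym : AntipodallySymmetric C) (γ : Curve) :
    length ξ C (flip γ) = length ξ C γ := by
  unfold length
  apply intervalIntegral.integral_congr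
  intro t _
  simp only
  rw [flip_u1, flip_u3, flip_nvec, flip_x, neg_sq, ← hsym (γ.x t) (nvec (γ.th t))]

theorem antipode_antipode (p : Pt) : antipode (antipode p) = p := by
  simp [antipode]

theorem flip_mem_Gamma0 {γ : Curve} {a b : Pt} (h : γ ∈ Gamma0 a b) :
    flip γ ∈ Gamma0 (antipode a) (antipode b) := by
  obtain ⟨⟨hx, hth⟩, hhor, j1, j2, j3, j4⟩ := h
  refine ⟨⟨hx, pc1_add_const _ hth⟩, ?_, j1, j2, ?_, ?_⟩
  · intro t ht hd
    obtain ⟨c, hc⟩ := hhor t ht hd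
    refine ⟨-c, ?_⟩
    rw [flip_x, flip_nvec, hc, neg_smul, smul_neg, neg_neg]
  · rw [flip_nvec, j3]; rfl
  · rw [flip_nvec, j4]; rfl

theorem flip_mem_Gamma0plus {γ : Curve} {a b : Pt} (h : γ ∈ Gamma0minus a b) :
    flip γ ∈ Gamma0plus (antipode a) (antipode b) := by
  refine ⟨flip_mem_Gamma0 h.1, fun t ht hd => ?_⟩
  rw [flip_u1]
  have := h.2 t ht hd
  linarith

/-! ### Concat -/

def concat (γ₁ γ₂ : Curve) : Curve :=
  ⟨glue γ₁.x γ₂.x, glue γ₁.th (fun s => γ₂.th s + (γ₁.th 1 - γ₂.th 0))⟩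

variable {γ₁ γ₂ : Curve}

theorem concat_x : (concat γ₁ γ₂).x = glue γ₁.x γ₂.x := rfl

theorem concat_th :
    (concat γ₁ γ₂).th = glue γ₁.th (fun s => γ₂.th s + (γ₁.th 1 - γ₂.th 0)) := rfl

theorem nvec_shift (hb : nvec (γ₁.th 1) = nvec (γ₂.th 0)) (θ : ℝ) :
    nvec (θ + (γ₁.th 1 - γ₂.th 0)) = nvec θ := by
  obtain ⟨k, hk⟩ := nvec_eq_of_eq hb
  have h : θ + (γ₁.th 1 - γ₂.th 0) = θ + 2 * Real.pi * k := by rw [hk]; ring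
  rw [h, nvec_add_two_pi_int]

theorem concat_th_left {t : ℝ} (h : t ≤ 1/4) :
    (concat γ₁ γ₂).th t = γ₁.th (4*t) := by
  rw [concat_th]; simp only [glue, if_pos h]

theorem concat_x_left {t : ℝ} (h : t ≤ 1/4) :
    (concat γ₁ γ₂).x t = γ₁.x (4*t) := by
  rw [concat_x]; simp only [glue, if_pos h]

theorem concat_th_right {t : ℝ} (h : 3/4 < t) :
    (concat γ₁ γ₂).th t = γ₂.th (4*t - 3) + (γ₁.th 1 - γ₂.th 0) := by
  rw [concat_th]
  simp only [glue, if_neg (by intro hh; linarith : ¬ t ≤ 1/4),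
    if_neg (not_le.2 h)]

theorem concat_x_right {t : ℝ} (h : 3/4 < t) :
    (concat γ₁ γ₂).x t = γ₂.x (4*t - 3) := by
  rw [concat_x]
  simp only [glue, if_neg (by intro hh; linarith : ¬ t ≤ 1/4),
    if_neg (not_le.2 h)]

theorem concat_u1_left {t : ℝ} (h : t < 1/4) :
    (concat γ₁ γ₂).u1 t = 4 * γ₁.u1 (4*t) := by
  unfold Curve.u1
  rw [concat_x, glue_deriv_left _ _ h, concat_th_left h.le, dot_smul_left]

theorem concat_u3_left {t : ℝ} (h : t < 1/4) :
    (concat γ₁ γ₂).u3 t = 4 * γ₁.u3 (4*t) := by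
  unfold Curve.u3
  rw [concat_th, glue_deriv_left _ _ h, smul_eq_mul]

theorem concat_u1_mid {t : ℝ} (h1 : 1/4 < t) (h2 : t < 3/4) :
    (concat γ₁ γ₂).u1 t = 0 := by
  unfold Curve.u1
  rw [concat_x, glue_deriv_mid _ _ h1 h2]
  simp [dot]

theorem concat_u3_mid {t : ℝ} (h1 : 1/4 < t) (h2 : t < 3/4) :
    (concat γ₁ γ₂).u3 t = 0 := by
  unfold Curve.u3
  rw [concat_th, glue_deriv_mid _ _ h1 h2]

theorem concat_u1_right (hb : nvec (γ₁.th 1) = nvec (γ₂.th 0)) {t : ℝ} (h : 3/4 < t) :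
    (concat γ₁ γ₂).u1 t = 4 * γ₂.u1 (4*t - 3) := by
  unfold Curve.u1
  rw [concat_x, glue_deriv_right _ _ h, concat_th_right h, nvec_shift hb, dot_smul_left]

theorem concat_u3_right {t : ℝ} (h : 3/4 < t) :
    (concat γ₁ γ₂).u3 t = 4 * γ₂.u3 (4*t - 3) := by
  unfold Curve.u3
  rw [concat_th, glue_deriv_right _ _ h, smul_eq_mul]
  congr 1
  rw [deriv_add_const]


theorem concat_mem_Gamma0 {a b c : Pt} (h₁ : γ₁ ∈ Gamma0 a b) (h₂ : γ₂ ∈ Gamma0 b c) :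
    concat γ₁ γ₂ ∈ Gamma0 a c := by
  obtain ⟨⟨hx1, hth1⟩, hhor1, j1, j2, j3, j4⟩ := h₁
  obtain ⟨⟨hx2, hth2⟩, hhor2, k1, k2, k3, k4⟩ := h₂
  have hb : nvec (γ₁.th 1) = nvec (γ₂.th 0) := by rw [j4, k3]
  have hxx : γ₁.x 1 = γ₂.x 0 := by rw [j2, k1]
  refine ⟨⟨?_, ?_⟩, ?_, ?_, ?_, ?_, ?_⟩
  · rw [concat_x]
    exact glue_pc1 _ _ ⟨hx1.1, hx1.2⟩ ⟨hx2.1, hx2.2⟩ hxx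
  · rw [concat_th]
    refine glue_pc1 _ _ ⟨hth1.1, hth1.2⟩ (pc1_add_const _ ⟨hth2.1, hth2.2⟩) (by ring)
  · -- Horizontal
    intro t ht hd
    rw [concat_x] at hd
    obtain ⟨ht0, ht1⟩ := mem_Icc.1 ht
    rcases lt_trichotomy t (1/4) with h | h | h
    · obtain ⟨c', hc'⟩ := hhor1 (4*t) (mem_Icc.2 ⟨by linarith, by linarith⟩)
        ((glue_diff_left _ _ h).1 hd)
      refine ⟨4 * c', ?_⟩
      rw [concat_x, glue_deriv_left _ _ h, concat_th_left h.le, hc', smul_smul]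
    · refine ⟨0, ?_⟩
      rw [concat_x, zero_smul]
      subst h
      exact deriv_zero_of_right_const hd (glue_ev_right_const_quarter γ₁.x γ₂.x)
    · rcases lt_trichotomy t (3/4) with h' | h' | h'
      · refine ⟨0, ?_⟩
        rw [concat_x, zero_smul, glue_deriv_mid _ _ h h']
      · refine ⟨0, ?_⟩
        rw [concat_x, zero_smul]
        subst h'
        exact deriv_zero_of_left_const hd (glue_ev_left_const_3quarter γ₁.x γ₂.x)
      · obtain ⟨c', hc'⟩ := hhor2 (4*t - 3) (mem_Icc.2 ⟨by linarith, by linarith⟩)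
          ((glue_diff_right _ _ h').1 hd)
        refine ⟨4 * c', ?_⟩
        rw [concat_x, glue_deriv_right _ _ h', concat_th_right h', nvec_shift hb,
          hc', smul_smul]
  · rw [concat_x_left (by norm_num : (0:ℝ) ≤ 1/4), show (4:ℝ) * 0 = 0 by norm_num, j1]
  · rw [concat_x_right (by norm_num : (3/4:ℝ) < 1), show (4:ℝ) * 1 - 3 = 1 by norm_num, k2]
  · rw [concat_th_left (by norm_num : (0:ℝ) ≤ 1/4), show (4:ℝ) * 0 = 0 by norm_num, j3]
  · rw [concat_th_right (by norm_num : (3/4:ℝ) < 1), nvec_shift hb,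
      show (4:ℝ) * 1 - 3 = 1 by norm_num, k4]

theorem length_nonneg {ξ : ℝ} {C : Pt → ℝ} (hC0 : ∀ q, 0 ≤ C q) (γ : Curve) :
    0 ≤ length ξ C γ := by
  unfold length
  apply intervalIntegral.integral_nonneg (by norm_num)
  intro u _
  exact mul_nonneg (hC0 _) (Real.sqrt_nonneg _)

theorem sqrt_scale (ξ u w : ℝ) :
    Real.sqrt (ξ^2 * (4*u)^2 + (4*w)^2) = 4 * Real.sqrt (ξ^2 * u^2 + w^2) := by
  have h : ξ^2 * (4*u)^2 + (4*w)^2 = 4^2 * (ξ^2 * u^2 + w^2) := by ring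
  rw [h, Real.sqrt_mul (by positivity), Real.sqrt_sq (by norm_num : (0:ℝ) ≤ 4)]

theorem length_concat_le {ξ : ℝ} {C : Pt → ℝ} (hC0 : ∀ q, 0 ≤ C q)
    (hb : nvec (γ₁.th 1) = nvec (γ₂.th 0)) :
    length ξ C (concat γ₁ γ₂) ≤ length ξ C γ₁ + length ξ C γ₂ := by
  set F : ℝ → ℝ := fun t =>
    C ((concat γ₁ γ₂).x t, nvec ((concat γ₁ γ₂).th t)) *
      Real.sqrt (ξ^2 * (concat γ₁ γ₂).u1 t^2 + (concat γ₁ γ₂).u3 t^2) with hF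
  set F₁ : ℝ → ℝ := fun t =>
    C (γ₁.x t, nvec (γ₁.th t)) * Real.sqrt (ξ^2 * γ₁.u1 t^2 + γ₁.u3 t^2) with hF₁
  set F₂ : ℝ → ℝ := fun t =>
    C (γ₂.x t, nvec (γ₂.th t)) * Real.sqrt (ξ^2 * γ₂.u1 t^2 + γ₂.u3 t^2) with hF₂
  have hlen : length ξ C (concat γ₁ γ₂) = ∫ t in (0:ℝ)..1, F t := rfl
  have hlen1 : length ξ C γ₁ = ∫ t in (0:ℝ)..1, F₁ t := rfl
  have hlen2 : length ξ C γ₂ = ∫ t in (0:ℝ)..1, F₂ t := rfl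
  have hL : ∀ t : ℝ, t < 1/4 → F t = 4 * F₁ (4*t) := by
    intro t h
    rw [hF, hF₁]
    simp only
    rw [concat_u1_left h, concat_u3_left h, concat_x_left h.le, concat_th_left h.le,
      sqrt_scale]
    ring
  have hM : ∀ t : ℝ, 1/4 < t → t < 3/4 → F t = 0 := by
    intro t h1 h2
    rw [hF]
    simp only
    rw [concat_u1_mid h1 h2, concat_u3_mid h1 h2]
    simp
  have hR : ∀ t : ℝ, 3/4 < t → F t = 4 * F₂ (4*t - 3) := by
    intro t h
    rw [hF, hF₂]
    simp only
    rw [concat_u1_right hb h, concat_u3_right h, concat_x_right h, concat_th_right h,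
      nvec_shift hb, sqrt_scale]
    ring
  by_cases hInt : IntervalIntegrable F MeasureTheory.volume 0 1
  · have i1 : IntervalIntegrable F MeasureTheory.volume 0 (1/4) :=
      hInt.mono_set (by
        rw [uIcc_of_le (by norm_num : (0:ℝ) ≤ 1/4), uIcc_of_le (by norm_num : (0:ℝ) ≤ 1)]
        exact Icc_subset_Icc le_rfl (by norm_num))
    have i2 : IntervalIntegrable F MeasureTheory.volume (1/4) (3/4) :=
      hInt.mono_set (by
        rw [uIcc_of_le (by norm_num : (1/4:ℝ) ≤ 3/4), uIcc_of_le (by norm_num : (0:ℝ) ≤ 1)]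
        exact Icc_subset_Icc (by norm_num) (by norm_num))
    have i3 : IntervalIntegrable F MeasureTheory.volume (3/4) 1 :=
      hInt.mono_set (by
        rw [uIcc_of_le (by norm_num : (3/4:ℝ) ≤ 1), uIcc_of_le (by norm_num : (0:ℝ) ≤ 1)]
        exact Icc_subset_Icc (by norm_num) le_rfl)
    have e23 := intervalIntegral.integral_add_adjacent_intervals i2 i3
    have e123 := intervalIntegral.integral_add_adjacent_intervals i1 (i2.trans i3)
    have hP1 : (∫ t in (0:ℝ)..(1/4), F t) = length ξ C γ₁ := by
      have hcg : (∫ t in (0:ℝ)..(1/4), F t) = ∫ t in (0:ℝ)..(1/4), 4 * F₁ (4*t) := by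
        apply intervalIntegral.integral_congr_ae
        have hne : ∀ᵐ (t : ℝ), t ∉ ({1/4} : Set ℝ) :=
          MeasureTheory.measure_eq_zero_iff_ae_notMem.mp (MeasureTheory.measure_singleton _)
        filter_upwards [hne] with t ht htI
        rw [Set.uIoc_of_le (by norm_num : (0:ℝ) ≤ 1/4)] at htI
        have hlt : t < 1/4 := lt_of_le_of_ne htI.2 (by simpa using ht)
        exact hL t hlt
      rw [hcg, intervalIntegral.integral_const_mul,
        intervalIntegral.integral_comp_mul_left F₁ (by norm_num : (4:ℝ) ≠ 0),
        show (4:ℝ) * 0 = 0 by norm_num, show (4:ℝ) * (1/4) = 1 by norm_num,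
        smul_eq_mul, hlen1]
      ring
    have hP2 : (∫ t in (1/4:ℝ)..(3/4), F t) = 0 := by
      have hcg : (∫ t in (1/4:ℝ)..(3/4), F t) = ∫ t in (1/4:ℝ)..(3/4), (0:ℝ) := by
        apply intervalIntegral.integral_congr_ae
        have hne : ∀ᵐ (t : ℝ), t ∉ ({3/4} : Set ℝ) :=
          MeasureTheory.measure_eq_zero_iff_ae_notMem.mp (MeasureTheory.measure_singleton _)
        filter_upwards [hne] with t ht htI
        rw [Set.uIoc_of_le (by norm_num : (1/4:ℝ) ≤ 3/4)] at htI
        have hlt : t < 3/4 := lt_of_le_of_ne htI.2 (by simpa using ht)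
        exact hM t htI.1 hlt
      rw [hcg, intervalIntegral.integral_zero]
    have hP3 : (∫ t in (3/4:ℝ)..1, F t) = length ξ C γ₂ := by
      have hcg : (∫ t in (3/4:ℝ)..1, F t) = ∫ t in (3/4:ℝ)..1, 4 * F₂ (4*t - 3) := by
        apply intervalIntegral.integral_congr_ae
        filter_upwards with t htI
        rw [Set.uIoc_of_le (by norm_num : (3/4:ℝ) ≤ 1)] at htI
        exact hR t htI.1
      rw [hcg, intervalIntegral.integral_const_mul,
        intervalIntegral.integral_comp_mul_sub F₂ (by norm_num : (4:ℝ) ≠ 0) 3,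
        show (4:ℝ) * (3/4) - 3 = 0 by norm_num, show (4:ℝ) * 1 - 3 = 1 by norm_num,
        smul_eq_mul, hlen2]
      ring
    rw [hlen, ← e123, ← e23, hP1, hP2, hP3]
    simp
  · rw [hlen, intervalIntegral.integral_undef hInt]
    exact add_nonneg (length_nonneg hC0 γ₁) (length_nonneg hC0 γ₂)


/-! ### Distance machinery -/

variable {ξ : ℝ} {C : Pt → ℝ}

theorem dF0_le {γ : Curve} {a b : Pt} (h : γ ∈ Gamma0 a b) :
    dF0 ξ C a b ≤ ENNReal.ofReal (length ξ C γ) := iInf₂_le γ h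

theorem dF0plus_le {γ : Curve} {a b : Pt} (h : γ ∈ Gamma0plus a b) :
    dF0plus ξ C a b ≤ ENNReal.ofReal (length ξ C γ) := iInf₂_le γ h

theorem dF0_le_dF0plus (a b : Pt) : dF0 ξ C a b ≤ dF0plus ξ C a b :=
  biInf_mono fun _ hγ => hγ.1

theorem dF0_antipode_le (hsym : AntipodallySymmetric C) (a b : Pt) :
    dF0 ξ C (antipode a) (antipode b) ≤ dF0 ξ C a b := by
  refine le_iInf₂ fun γ hγ => ?_
  exact (dF0_le (flip_mem_Gamma0 hγ)).trans_eq (by rw [length_flip hsym])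

theorem dF0_triangle (hC0 : ∀ q, 0 ≤ C q) (a b c : Pt) :
    dF0 ξ C a c ≤ dF0 ξ C a b + dF0 ξ C b c := by
  have key : ∀ γ₁ ∈ Gamma0 a b, ∀ γ₂ ∈ Gamma0 b c,
      dF0 ξ C a c ≤ ENNReal.ofReal (length ξ C γ₁) + ENNReal.ofReal (length ξ C γ₂) := by
    intro γ₁ h₁ γ₂ h₂
    have hb : nvec (γ₁.th 1) = nvec (γ₂.th 0) := by
      rw [h₁.2.2.2.2.2, h₂.2.2.2.2.1]
    calc dF0 ξ C a c ≤ ENNReal.ofReal (length ξ C (concat γ₁ γ₂)) :=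
          dF0_le (concat_mem_Gamma0 h₁ h₂)
      _ ≤ ENNReal.ofReal (length ξ C γ₁ + length ξ C γ₂) :=
          ENNReal.ofReal_le_ofReal (length_concat_le hC0 hb)
      _ ≤ _ := ENNReal.ofReal_add_le
  show dF0 ξ C a c ≤ (⨅ γ ∈ Gamma0 a b, ENNReal.ofReal (length ξ C γ)) +
    ⨅ γ ∈ Gamma0 b c, ENNReal.ofReal (length ξ C γ)
  rw [ENNReal.iInf_add]
  refine le_iInf fun γ₁ => ?_
  rw [ENNReal.iInf_add]
  refine le_iInf fun h₁ => ?_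
  rw [ENNReal.add_iInf]
  refine le_iInf fun γ₂ => ?_
  rw [ENNReal.add_iInf]
  refine le_iInf fun h₂ => ?_
  exact key γ₁ h₁ γ₂ h₂

theorem antipode_mem_pair {q p : Pt} (h : q ∈ ({p, antipode p} : Set Pt)) :
    antipode q ∈ ({p, antipode p} : Set Pt) := by
  rcases h with h | h
  · subst h; exact Or.inr rfl
  · rw [mem_singleton_iff] at h; subst h
    rw [antipode_antipode]; exact Or.inl rfl

theorem dproj_le_dF0 {p₀ p₁ r₀ r₁ : Pt} (h₀ : r₀ ∈ ({p₀, antipode p₀} : Set Pt))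
    (h₁ : r₁ ∈ ({p₁, antipode p₁} : Set Pt)) :
    dproj ξ C p₀ p₁ ≤ dF0 ξ C r₀ r₁ := by
  rcases h₀ with h₀ | h₀ <;> rcases h₁ with h₁ | h₁ <;>
    first
    | (rw [mem_singleton_iff] at h₀) | skip
  all_goals try rw [mem_singleton_iff] at h₀
  all_goals try rw [mem_singleton_iff] at h₁
  all_goals subst h₀; subst h₁
  · exact (min_le_left _ _).trans (min_le_left _ _)
  · exact (min_le_left _ _).trans (min_le_right _ _)
  · exact (min_le_right _ _).trans (min_le_left _ _)
  · exact (min_le_right _ _).trans (min_le_right _ _)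

theorem dc_le_dF0plus {p₀ p₁ r₀ r₁ : Pt} (h₀ : r₀ ∈ ({p₀, antipode p₀} : Set Pt))
    (h₁ : r₁ ∈ ({p₁, antipode p₁} : Set Pt)) :
    dc ξ C p₀ p₁ ≤ dF0plus ξ C r₀ r₁ := by
  rcases h₀ with h₀ | h₀
  all_goals try rw [mem_singleton_iff] at h₀
  all_goals rcases h₁ with h₁ | h₁
  all_goals try rw [mem_singleton_iff] at h₁
  all_goals subst h₀; subst h₁
  · exact (min_le_left _ _).trans (min_le_left _ _)
  · exact (min_le_left _ _).trans (min_le_right _ _)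
  · exact (min_le_right _ _).trans (min_le_left _ _)
  · exact (min_le_right _ _).trans (min_le_right _ _)

theorem dproj_eq_exists (ξ : ℝ) (C : Pt → ℝ) (p₀ p₁ : Pt) :
    ∃ r₀ ∈ ({p₀, antipode p₀} : Set Pt), ∃ r₁ ∈ ({p₁, antipode p₁} : Set Pt),
      dproj ξ C p₀ p₁ = dF0 ξ C r₀ r₁ := by
  unfold dproj
  rcases min_choice (min (dF0 ξ C p₀ p₁) (dF0 ξ C p₀ (antipode p₁)))
    (min (dF0 ξ C (antipode p₀) p₁) (dF0 ξ C (antipode p₀) (antipode p₁))) with h | h <;>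
    rw [h]
  · rcases min_choice (dF0 ξ C p₀ p₁) (dF0 ξ C p₀ (antipode p₁)) with h' | h' <;> rw [h']
    · exact ⟨p₀, Or.inl rfl, p₁, Or.inl rfl, rfl⟩
    · exact ⟨p₀, Or.inl rfl, antipode p₁, Or.inr rfl, rfl⟩
  · rcases min_choice (dF0 ξ C (antipode p₀) p₁) (dF0 ξ C (antipode p₀) (antipode p₁))
      with h' | h' <;> rw [h']
    · exact ⟨antipode p₀, Or.inr rfl, p₁, Or.inl rfl, rfl⟩
    · exact ⟨antipode p₀, Or.inr rfl, antipode p₁, Or.inr rfl, rfl⟩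

theorem dproj_triangle (hsym : AntipodallySymmetric C) (hC0 : ∀ q, 0 ≤ C q) (p₀ p₁ p₂ : Pt) :
    dproj ξ C p₀ p₁ ≤ dproj ξ C p₀ p₂ + dproj ξ C p₂ p₁ := by
  obtain ⟨r₀, h₀, r₂, h₂, e₁⟩ := dproj_eq_exists ξ C p₀ p₂
  obtain ⟨s₂, hs₂, r₁, h₁, e₂⟩ := dproj_eq_exists ξ C p₂ p₁
  rw [e₁, e₂]
  have hcase : r₂ = s₂ ∨ r₂ = antipode s₂ := by
    rcases h₂ with h | h
    all_goals try rw [mem_singleton_iff] at h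
    all_goals rcases hs₂ with h' | h'
    all_goals try rw [mem_singleton_iff] at h'
    · exact Or.inl (h.trans h'.symm)
    · exact Or.inr (by rw [h, h', antipode_antipode])
    · exact Or.inr (by rw [h, h'])
    · exact Or.inl (h.trans h'.symm)
  rcases hcase with hc | hc
  · subst hc
    exact (dproj_le_dF0 h₀ h₁).trans (dF0_triangle hC0 _ _ _)
  · subst hc
    calc dproj ξ C p₀ p₁ ≤ dF0 ξ C r₀ (antipode r₁) :=
          dproj_le_dF0 h₀ (antipode_mem_pair h₁)
      _ ≤ dF0 ξ C r₀ (antipode s₂) + dF0 ξ C (antipode s₂) (antipode r₁) :=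
          dF0_triangle hC0 _ _ _
      _ ≤ dF0 ξ C r₀ (antipode s₂) + dF0 ξ C s₂ r₁ :=
          add_le_add le_rfl (dF0_antipode_le hsym s₂ r₁)

theorem dproj_le_dc (p₀ p₁ : Pt) : dproj ξ C p₀ p₁ ≤ dc ξ C p₀ p₁ :=
  min_le_min (min_le_min (dF0_le_dF0plus _ _) (dF0_le_dF0plus _ _))
    (min_le_min (dF0_le_dF0plus _ _) (dF0_le_dF0plus _ _))

end Aux


/-- triangle inequality for `d_c` at cusp-free-reachable endpoints. -/
theorem dc_triangle_of_cuspfree_minimizer (ξ δ : ℝ) (hξ : 0 < ξ) (hδ : 0 < δ)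
    (C : Pt → ℝ) (hC : Continuous C) (hCδ : ∀ q, δ ≤ C q)
    (hsym : AntipodallySymmetric C) (p₀ p₁ : Pt)
    (hmin : ∃ q₀ ∈ ({p₀, antipode p₀} : Set Pt), ∃ q₁ ∈ ({p₁, antipode p₁} : Set Pt),
      ∃ γ ∈ Gamma0plus q₀ q₁ ∪ Gamma0minus q₀ q₁,
        ENNReal.ofReal (length ξ C γ) = dproj ξ C p₀ p₁) :
    ∀ p₂ : Pt, dc ξ C p₀ p₁ ≤ dc ξ C p₀ p₂ + dc ξ C p₂ p₁ := by
  intro p₂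
  have hC0 : ∀ q, 0 ≤ C q := fun q => le_trans hδ.le (hCδ q)
  -- Step 1: dc p₀ p₁ ≤ dproj p₀ p₁, using the cusp-free minimizer.
  obtain ⟨q₀, hq₀, q₁, hq₁, γ, hγ, hlen⟩ := hmin
  have step1 : dc ξ C p₀ p₁ ≤ dproj ξ C p₀ p₁ := by
    rcases hγ with hγp | hγm
    · calc dc ξ C p₀ p₁ ≤ dF0plus ξ C q₀ q₁ := Aux.dc_le_dF0plus hq₀ hq₁
        _ ≤ ENNReal.ofReal (length ξ C γ) := Aux.dF0plus_le hγp
        _ = dproj ξ C p₀ p₁ := hlen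
    · calc dc ξ C p₀ p₁ ≤ dF0plus ξ C (antipode q₀) (antipode q₁) :=
            Aux.dc_le_dF0plus (Aux.antipode_mem_pair hq₀) (Aux.antipode_mem_pair hq₁)
        _ ≤ ENNReal.ofReal (length ξ C (Aux.flip γ)) :=
            Aux.dF0plus_le (Aux.flip_mem_Gamma0plus hγm)
        _ = ENNReal.ofReal (length ξ C γ) := by rw [Aux.length_flip hsym]
        _ = dproj ξ C p₀ p₁ := hlen
  calc dc ξ C p₀ p₁ ≤ dproj ξ C p₀ p₁ := step1
    _ ≤ dproj ξ C p₀ p₂ + dproj ξ C p₂ p₁ := Aux.dproj_triangle hsym hC0 p₀ p₁ p₂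
    _ ≤ dc ξ C p₀ p₂ + dc ξ C p₂ p₁ :=
        add_le_add (Aux.dproj_le_dc _ _) (Aux.dproj_le_dc _ _)


end
end

section
/- Global controllability (Proposition 2, first part): For every pair of points p₀, p₁ of the space of positions and orientations there exists a horizontal candidate curve from p₀ to p₁ whose spatial control is nonnegative wherever defined, i.e. Γ₀⁺(p₀,p₁) ≠ ∅. Consequently d_F₀⁺(p₀,p₁) < ∞, and hence d_F₀(p₀,p₁), d_c([p₀],[p₁]) and d_proj([p₀],[p₁]) are all finite. -/
open Set MeasureTheory
open scoped ENNReal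

noncomputable section

section GCAux

/-- `expNegInvGlue` is monotone. -/
lemma expNegInvGlue_monotone : Monotone expNegInvGlue := by
  intro a b hab
  rcases le_or_gt b 0 with hb | hb
  · rw [expNegInvGlue.zero_of_nonpos (hab.trans hb), expNegInvGlue.zero_of_nonpos hb]
  rcases le_or_gt a 0 with ha | ha
  · rw [expNegInvGlue.zero_of_nonpos ha]; exact (expNegInvGlue.pos_of_pos hb).le
  · have h1 : expNegInvGlue a = Real.exp (-a⁻¹) := by
      simp [expNegInvGlue, not_le.2 ha]
    have h2 : expNegInvGlue b = Real.exp (-b⁻¹) := by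
      simp [expNegInvGlue, not_le.2 hb]
    rw [h1, h2]
    exact Real.exp_le_exp.2 (neg_le_neg (inv_anti₀ ha hab))

/-- `Real.smoothTransition` is monotone. -/
lemma smoothTransition_monotone : Monotone Real.smoothTransition := by
  intro a b hab
  have ga := expNegInvGlue.nonneg a
  have gb := expNegInvGlue.nonneg b
  have hmono := expNegInvGlue_monotone hab
  have hmono' : expNegInvGlue (1 - b) ≤ expNegInvGlue (1 - a) :=
    expNegInvGlue_monotone (by linarith)
  unfold Real.smoothTransition
  rw [div_le_div_iff₀ (Real.smoothTransition.pos_denom a) (Real.smoothTransition.pos_denom b)]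
  nlinarith [expNegInvGlue.nonneg (1 - a), expNegInvGlue.nonneg (1 - b)]

/-- A monotone real function has nonnegative `deriv` everywhere. -/
lemma monotone_deriv_nonneg {f : ℝ → ℝ} (hf : Monotone f) (t : ℝ) : 0 ≤ deriv f t := by
  by_cases hd : DifferentiableAt ℝ f t
  · have h := hd.hasDerivAt
    rw [hasDerivAt_iff_tendsto_slope] at h
    refine ge_of_tendsto h ?_
    filter_upwards [self_mem_nhdsWithin] with x hx
    rw [slope_def_field]
    rcases lt_or_gt_of_ne (Ne.symm hx) with hlt | hgt
    · exact div_nonneg (sub_nonneg.2 (hf hlt.le)) (sub_nonneg.2 hlt.le)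
    · exact div_nonneg_iff.2 (Or.inr ⟨sub_nonpos.2 (hf hgt.le), sub_nonpos.2 hgt.le⟩)
  · rw [deriv_zero_of_not_differentiableAt hd]

/-- The transition used for the spatial part: 0 on `(-∞,1/3]`, 1 on `[2/3,∞)`. -/
def GCf (t : ℝ) : ℝ := Real.smoothTransition (3 * t - 1)
/-- Transition for the first rotation: 0 at `0`, 1 on `[1/3,∞)`. -/
def GCg1 (t : ℝ) : ℝ := Real.smoothTransition (3 * t)
/-- Transition for the second rotation: 0 on `(-∞,2/3]`, 1 at `1`. -/
def GCg2 (t : ℝ) : ℝ := Real.smoothTransition (3 * t - 2)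

lemma GCf_contDiff : ContDiff ℝ 1 GCf :=
  (Real.smoothTransition.contDiff (n := 1)).comp
    ((contDiff_const.mul contDiff_id).sub contDiff_const)
lemma GCg1_contDiff : ContDiff ℝ 1 GCg1 :=
  (Real.smoothTransition.contDiff (n := 1)).comp (contDiff_const.mul contDiff_id)
lemma GCg2_contDiff : ContDiff ℝ 1 GCg2 :=
  (Real.smoothTransition.contDiff (n := 1)).comp
    ((contDiff_const.mul contDiff_id).sub contDiff_const)

lemma GCf_mono : Monotone GCf := fun a b h =>
  smoothTransition_monotone (by linarith)

lemma GCf_zero {t : ℝ} (h : t ≤ 1/3) : GCf t = 0 :=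
  Real.smoothTransition.zero_of_nonpos (by linarith)
lemma GCf_one {t : ℝ} (h : 2/3 ≤ t) : GCf t = 1 :=
  Real.smoothTransition.one_of_one_le (by linarith)
lemma GCg1_zero : GCg1 0 = 0 :=
  Real.smoothTransition.zero_of_nonpos (by norm_num)
lemma GCg1_one {t : ℝ} (h : 1/3 ≤ t) : GCg1 t = 1 :=
  Real.smoothTransition.one_of_one_le (by linarith)
lemma GCg2_zero {t : ℝ} (h : t ≤ 2/3) : GCg2 t = 0 :=
  Real.smoothTransition.zero_of_nonpos (by linarith)
lemma GCg2_one : GCg2 1 = 1 :=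
  Real.smoothTransition.one_of_one_le (by norm_num)

lemma deriv_GCf_zero {t : ℝ} (h : t ∉ Icc (1/3 : ℝ) (2/3)) : deriv GCf t = 0 := by
  rw [mem_Icc, not_and_or, not_le, not_le] at h
  rcases h with h | h
  · have hev : GCf =ᶠ[nhds t] fun _ => (0 : ℝ) := by
      filter_upwards [Iio_mem_nhds h] with s hs
      exact GCf_zero (le_of_lt hs)
    rw [hev.deriv_eq, deriv_const]
  · have hev : GCf =ᶠ[nhds t] fun _ => (1 : ℝ) := by
      filter_upwards [Ioi_mem_nhds h] with s hs
      exact GCf_one (le_of_lt hs)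
    rw [hev.deriv_eq, deriv_const]

lemma deriv_GCf_nonneg (t : ℝ) : 0 ≤ deriv GCf t := monotone_deriv_nonneg GCf_mono t

end GCAux

/-- global controllability. -/
theorem global_controllability (ξ δ : ℝ) (hξ : 0 < ξ) (hδ : 0 < δ)
    (C : Pt → ℝ) (hC : Continuous C) (hCδ : ∀ q, δ ≤ C q)
    (p₀ p₁ : Pt) (h₀ : ∃ θ : ℝ, nvec θ = p₀.2) (h₁ : ∃ θ : ℝ, nvec θ = p₁.2) :
    (Gamma0plus p₀ p₁).Nonempty ∧
    dF0plus ξ C p₀ p₁ < ⊤ ∧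
    dF0 ξ C p₀ p₁ < ⊤ ∧
    dc ξ C p₀ p₁ < ⊤ ∧
    dproj ξ C p₀ p₁ < ⊤ := by
  obtain ⟨θ₀, hθ₀⟩ := h₀
  obtain ⟨θ₁, hθ₁⟩ := h₁
  obtain ⟨r, α, hr, hvr⟩ : ∃ r α : ℝ, 0 ≤ r ∧ p₁.1 - p₀.1 = r • nvec α := by
    by_cases h : p₁.1 - p₀.1 = 0
    · exact ⟨0, θ₀, le_refl 0, by simp [h]⟩
    · set z : ℂ := ⟨(p₁.1 - p₀.1).1, (p₁.1 - p₀.1).2⟩ with hz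
      have hz0 : z ≠ 0 := by
        intro h0
        apply h
        have h12 : (p₁.1 - p₀.1).1 = 0 ∧ (p₁.1 - p₀.1).2 = 0 := by
          simpa [hz, Complex.ext_iff] using h0
        exact Prod.ext h12.1 h12.2
      have habs : ‖z‖ ≠ 0 := by simpa using hz0
      refine ⟨‖z‖, z.arg, norm_nonneg z, ?_⟩
      have hc := Complex.cos_arg hz0
      have hs := Complex.sin_arg z
      have hre : z.re = (p₁.1 - p₀.1).1 := rfl
      have him : z.im = (p₁.1 - p₀.1).2 := rfl
      refine Prod.ext ?_ ?_
      · show (p₁.1 - p₀.1).1 = (‖z‖ • nvec z.arg).1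
        simp only [Prod.smul_fst, smul_eq_mul, nvec]
        rw [hc, hre, mul_comm, div_mul_cancel₀ _ habs]
      · show (p₁.1 - p₀.1).2 = (‖z‖ • nvec z.arg).2
        simp only [Prod.smul_snd, smul_eq_mul, nvec]
        rw [hs, him, mul_comm, div_mul_cancel₀ _ habs]
  set γ : Curve :=
    ⟨fun t => p₀.1 + GCf t • (p₁.1 - p₀.1),
     fun t => θ₀ + GCg1 t * (α - θ₀) + GCg2 t * (θ₁ - α)⟩ with hγdef
  -- derivative of the spatial part
  have hxd : ∀ t : ℝ, HasDerivAt γ.x (deriv GCf t • (p₁.1 - p₀.1)) t := fun t =>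
    (((GCf_contDiff.differentiable one_ne_zero t).hasDerivAt.smul_const (p₁.1 - p₀.1)).const_add p₀.1)
  have hderivx : ∀ t : ℝ, deriv γ.x t = deriv GCf t • (p₁.1 - p₀.1) := fun t => (hxd t).deriv
  -- smoothness of the angular part
  have hth_cd : ContDiff ℝ 1 γ.th :=
    (contDiff_const.add (GCg1_contDiff.mul contDiff_const)).add (GCg2_contDiff.mul contDiff_const)
  -- on the middle interval the angle is constantly `α`
  have hmid : ∀ t : ℝ, t ∈ Icc (1/3 : ℝ) (2/3) → γ.th t = α := by
    intro t ht
    show θ₀ + GCg1 t * (α - θ₀) + GCg2 t * (θ₁ - α) = α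
    rw [GCg1_one ht.1, GCg2_zero ht.2]
    ring
  -- the curve is admissible
  have hadm : γ.Admissible := by
    constructor
    · refine ⟨(continuous_const.add ((GCf_contDiff.continuous).smul continuous_const)).continuousOn,
        ∅, fun t _ => ⟨(hxd t).differentiableAt, ?_⟩⟩
      have : deriv γ.x = fun t => deriv GCf t • (p₁.1 - p₀.1) := funext hderivx
      rw [this]
      exact ((GCf_contDiff.continuous_deriv le_rfl).smul continuous_const).continuousAt
    · refine ⟨(hth_cd.continuous).continuousOn, ∅, fun t _ =>
        ⟨hth_cd.differentiable one_ne_zero t, ?_⟩⟩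
      exact (hth_cd.continuous_deriv le_rfl).continuousAt
  -- the curve is horizontal
  have hhor : γ.Horizontal := by
    intro t _ _
    by_cases hm : t ∈ Icc (1/3 : ℝ) (2/3)
    · refine ⟨deriv GCf t * r, ?_⟩
      rw [hderivx t, hmid t hm, hvr, smul_smul]
    · exact ⟨0, by rw [hderivx t, deriv_GCf_zero hm, zero_smul, zero_smul]⟩
  -- the curve joins `p₀` to `p₁`
  have hjoins : γ.Joins p₀ p₁ := by
    refine ⟨?_, ?_, ?_, ?_⟩
    · show p₀.1 + GCf 0 • (p₁.1 - p₀.1) = p₀.1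
      rw [GCf_zero (by norm_num : (0:ℝ) ≤ 1/3), zero_smul, add_zero]
    · show p₀.1 + GCf 1 • (p₁.1 - p₀.1) = p₁.1
      rw [GCf_one (by norm_num : (2:ℝ)/3 ≤ 1), one_smul]
      abel
    · show nvec (θ₀ + GCg1 0 * (α - θ₀) + GCg2 0 * (θ₁ - α)) = p₀.2
      rw [GCg1_zero, GCg2_zero (by norm_num : (0:ℝ) ≤ 2/3)]
      simpa using hθ₀
    · show nvec (θ₀ + GCg1 1 * (α - θ₀) + GCg2 1 * (θ₁ - α)) = p₁.2
      rw [GCg1_one (by norm_num : (1:ℝ)/3 ≤ 1), GCg2_one]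
      rw [show θ₀ + 1 * (α - θ₀) + 1 * (θ₁ - α) = θ₁ by ring]
      exact hθ₁
  -- nonnegativity of the spatial control
  have hu1 : ∀ t ∈ Icc (0 : ℝ) 1, DifferentiableAt ℝ γ.x t → 0 ≤ γ.u1 t := by
    intro t _ _
    show 0 ≤ dot (deriv γ.x t) (nvec (γ.th t))
    rw [hderivx t]
    by_cases hm : t ∈ Icc (1/3 : ℝ) (2/3)
    · rw [hmid t hm, hvr, smul_smul]
      have hd := deriv_GCf_nonneg t
      have hsc := Real.sin_sq_add_cos_sq α
      simp only [dot, nvec, Prod.smul_fst, Prod.smul_snd, smul_eq_mul]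
      nlinarith [mul_nonneg hd hr]
    · rw [deriv_GCf_zero hm, zero_smul]
      simp [dot]
  have hmem : γ ∈ Gamma0plus p₀ p₁ := ⟨⟨hadm, hhor, hjoins⟩, hu1⟩
  have hplus : dF0plus ξ C p₀ p₁ < ⊤ :=
    lt_of_le_of_lt (iInf₂_le γ hmem) ENNReal.ofReal_lt_top
  have h0 : dF0 ξ C p₀ p₁ < ⊤ :=
    lt_of_le_of_lt (iInf₂_le γ hmem.1) ENNReal.ofReal_lt_top
  refine ⟨⟨γ, hmem⟩, hplus, h0, ?_, ?_⟩
  · exact lt_of_le_of_lt ((min_le_left _ _).trans (min_le_left _ _)) hplus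
  · exact lt_of_le_of_lt ((min_le_left _ _).trans (min_le_left _ _)) h0


end
end
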